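/- Let f, n, m be natural numbers with n > 3f and m ≥ n − f. Let P be a multiset of real numbers with card P = n and let U be a sub-multiset of P with card U = m. Suppose there exists a sub-multiset S of U with card S = f + 1 all of whose elements are at most a real number s. Then for every x ∈ U, the destination D(x, P) = (min(x, P_(f+1)) + max(x, P_(n−f)))/2 satisfies D(x, P) ≤ (s + max U)/2. -/

import Mathlib

/-- The k-th smallest element (1-indexed, counted with multiplicity) of a
multiset of real numbers. -/
noncomputable def nth (S : Multiset ℝ) (k : ℕ) : ℝ :=
  (S.sort (· ≤ ·)).getD (k - 1) 0

/-- The smallest element of a (nonempty) multiset of reals. -/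
noncomputable def mmin (S : Multiset ℝ) : ℝ := nth S 1

/-- The largest element of a (nonempty) multiset of reals. -/
noncomputable def mmax (S : Multiset ℝ) : ℝ := nth S S.card

/-- The diameter of a (nonempty) multiset of reals. -/
noncomputable def mdiam (S : Multiset ℝ) : ℝ := mmax S - mmin S

/-- If `P` contains a sub-multiset `T` with at least `k` elements all ≤ `c`,
then the `k`-th smallest element of `P` is ≤ `c`. -/
lemma nth_le_of_sub {P T : Multiset ℝ} {k : ℕ} {c : ℝ}
    (hT : T ≤ P) (hk : 1 ≤ k) (hkT : k ≤ Multiset.card T)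
    (hc : ∀ y ∈ T, y ≤ c) : nth P k ≤ c := by
  classical
  set l := P.sort (· ≤ ·) with hl
  have hsort : l.Pairwise (· ≤ ·) := P.pairwise_sort _
  have hperm : (l : Multiset ℝ) = P := P.sort_eq _
  have hlen : l.length = Multiset.card P := by rw [← hperm]; rfl
  have hkP : k ≤ Multiset.card P := hkT.trans (Multiset.card_le_card hT)
  have hidx : k - 1 < l.length := by omega
  have hcount : k ≤ (l.filter (fun y => decide (y ≤ c))).length := by
    have h1 : Multiset.card T ≤ Multiset.card (P.filter (· ≤ c)) := by
      have : T = T.filter (· ≤ c) := (Multiset.filter_eq_self.2 hc).symm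
      calc Multiset.card T = Multiset.card (T.filter (· ≤ c)) := by rw [← this]
        _ ≤ _ := Multiset.card_le_card (Multiset.filter_le_filter _ hT)
    have h2 : Multiset.card (P.filter (· ≤ c))
        = (l.filter (fun y => decide (y ≤ c))).length := by
      rw [← hperm]
      simp [Multiset.filter_coe]
    omega
  by_contra h
  push_neg at h
  have hnth : nth P k = l.get ⟨k - 1, hidx⟩ := by
    simp [nth, ← hl, List.getD, List.getElem?_eq_getElem hidx]
  rw [hnth] at h
  -- all elements in drop (k-1) are > c
  have hdrop : ∀ a ∈ l.drop (k - 1), ¬ (a ≤ c) := by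
    intro a ha
    obtain ⟨i, hi, hia⟩ := List.mem_iff_getElem.1 ha
    rw [List.getElem_drop] at hia
    have : l.get ⟨k - 1, hidx⟩ ≤ l.get ⟨k - 1 + i, by
        have := @List.length_drop _ (k-1) l; omega⟩ :=
      hsort.rel_get_of_le (by simp)
    rw [← hia] at *
    intro hle
    exact absurd (this.trans hle) (not_le.2 h)
  have hsplit : l.filter (fun y => decide (y ≤ c))
      = (l.take (k-1)).filter (fun y => decide (y ≤ c))
        ++ (l.drop (k-1)).filter (fun y => decide (y ≤ c)) := by
    rw [← List.filter_append, List.take_append_drop]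
  have hnil : (l.drop (k-1)).filter (fun y => decide (y ≤ c)) = [] := by
    apply List.filter_eq_nil_iff.2
    intro a ha
    simpa using hdrop a ha
  have : (l.filter (fun y => decide (y ≤ c))).length ≤ k - 1 := by
    rw [hsplit, hnil]
    simp only [List.length_append, List.length_nil, Nat.add_zero]
    calc ((l.take (k-1)).filter _).length ≤ (l.take (k-1)).length :=
          List.length_filter_le _ _
      _ ≤ k - 1 := by simp
  omega

lemma le_mmax_of_mem {U : Multiset ℝ} {x : ℝ} (hx : x ∈ U) : x ≤ mmax U := by
  classical
  set l := U.sort (· ≤ ·) with hl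
  have hsort : l.Pairwise (· ≤ ·) := U.pairwise_sort _
  have hperm : (l : Multiset ℝ) = U := U.sort_eq _
  have hlen : l.length = Multiset.card U := by rw [← hperm]; rfl
  have hxl : x ∈ l := by rw [← hperm] at hx; exact hx
  obtain ⟨i, hi, hix⟩ := List.mem_iff_getElem.1 hxl
  have hpos : 0 < l.length := by omega
  have hidx : Multiset.card U - 1 < l.length := by omega
  have hle : l[i] ≤ l.get ⟨Multiset.card U - 1, hidx⟩ :=
    hsort.rel_get_of_le (by simp; omega)
  have : mmax U = l.get ⟨Multiset.card U - 1, hidx⟩ := by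
    simp [mmax, nth, ← hl, List.getD, List.getElem?_eq_getElem hidx]
  rw [this, ← hix]
  exact hle

theorem stmt8 (f n m : ℕ) (P U : Multiset ℝ) (s : ℝ)
    (hn : n > 3 * f) (hm : m ≥ n - f)
    (hP : Multiset.card P = n) (hU : U ≤ P) (hUm : Multiset.card U = m)
    (hS : ∃ S : Multiset ℝ, S ≤ U ∧ Multiset.card S = f + 1 ∧ ∀ y ∈ S, y ≤ s) :
    ∀ x ∈ U,
      (min x (nth P (f + 1)) + max x (nth P (n - f))) / 2 ≤ (s + mmax U) / 2 := by
  intro x hx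
  obtain ⟨S, hSU, hScard, hSs⟩ := hS
  have h1 : nth P (f + 1) ≤ s :=
    nth_le_of_sub (hSU.trans hU) (by omega) (by omega) hSs
  have hmin : min x (nth P (f + 1)) ≤ s := (min_le_right _ _).trans h1
  have h2 : nth P (n - f) ≤ mmax U :=
    nth_le_of_sub hU (by omega) (by omega) (fun y hy => le_mmax_of_mem hy)
  have hxmax : x ≤ mmax U := le_mmax_of_mem hx
  have hmax : max x (nth P (n - f)) ≤ mmax U := max_le hxmax h2
  linarith
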